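/- The SCoRa MAP estimator is pairwise monotone for ratings: if two SCoRa datasets D and D' have the same comparisons and the same ratings except that one rating of entity a has value t in D and value t' in D' with t ≥ t', then θ_a*(D) − θ_0*(D) ≥ θ_a*(D') − θ_0*(D'). -/

import Mathlib

open MeasureTheory RealInnerProductSpace

noncomputable section

/-- The cumulant generating function `Φ_μ(θ) = log ∫ exp(θ r) dμ(r)` of a measure `μ` on `ℝ`. -/
def cgfm (μ : Measure ℝ) (θ : ℝ) : ℝ := Real.log (∫ r, Real.exp (θ * r) ∂μ)

/-- `μ` has finite exponential moments: `∫ exp(θ r) dμ(r) < ∞` for every `θ`. -/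
def HasExpMoments (μ : Measure ℝ) : Prop :=
  ∀ θ : ℝ, Integrable (fun r => Real.exp (θ * r)) μ

/-- The SCoRa negative log-posterior `L(β, θ0 | D)` for a dataset consisting of a multiset `C`
of comparisons `(b, c, r)` and a multiset `Rt` of ratings `(a, t)`, with embedding columns
`x a ∈ ℝ^D`, comparison root law `f`, rating root law `g`, and prior variances `sb2 = σ_β²`,
`s02 = σ_0²`. -/
def scoraLoss {Dd A : ℕ} (x : Fin A → EuclideanSpace ℝ (Fin Dd))
    (f g : Measure ℝ) (sb2 s02 : ℝ)
    (C : Multiset (Fin A × Fin A × ℝ)) (Rt : Multiset (Fin A × ℝ))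
    (β : EuclideanSpace ℝ (Fin Dd)) (θ0 : ℝ) : ℝ :=
  ‖β‖ ^ 2 / (2 * sb2) + θ0 ^ 2 / (2 * s02)
    + (C.map (fun q =>
        cgfm f ⟪x q.1 - x q.2.1, β⟫ - q.2.2 * ⟪x q.1 - x q.2.1, β⟫)).sum
    + (Rt.map (fun q =>
        cgfm g (⟪x q.1, β⟫ - θ0) - q.2 * (⟪x q.1, β⟫ - θ0))).sum

lemma integral_exp_pos' (μ : Measure ℝ) [IsProbabilityMeasure μ] (hμ : HasExpMoments μ) (θ : ℝ) :
    0 < ∫ r, Real.exp (θ * r) ∂μ := by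
  have := ProbabilityTheory.mgf_pos' (X := id) (μ := μ) (t := θ)
    (IsProbabilityMeasure.ne_zero μ) (by simpa using hμ θ)
  simpa [ProbabilityTheory.mgf] using this

lemma memLp_exp_half (μ : Measure ℝ) (hμ : HasExpMoments μ) (u : ℝ) :
    MemLp (fun r => Real.exp (u / 2 * r)) (ENNReal.ofReal 2) μ := by
  have hmeas : AEStronglyMeasurable (fun r => Real.exp (u / 2 * r)) μ :=
    (Real.continuous_exp.comp (continuous_const.mul continuous_id)).aestronglyMeasurable
  have : (ENNReal.ofReal 2) = (2 : ENNReal) := by norm_num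
  rw [this, memLp_two_iff_integrable_sq hmeas]
  have : (fun r => Real.exp (u / 2 * r) ^ 2) = fun r => Real.exp (u * r) := by
    funext r; rw [sq, ← Real.exp_add]; ring_nf
  rw [this]; exact hμ u

lemma cgfm_midpoint (μ : Measure ℝ) [IsProbabilityMeasure μ] (hμ : HasExpMoments μ) (u v : ℝ) :
    cgfm μ ((u + v) / 2) ≤ (cgfm μ u + cgfm μ v) / 2 := by
  have hpq : Real.HolderConjugate 2 2 := Real.HolderConjugate.two_two
  have hH := integral_mul_le_Lp_mul_Lq_of_nonneg (μ := μ) hpq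
    (f := fun r => Real.exp (u / 2 * r)) (g := fun r => Real.exp (v / 2 * r))
    (Filter.Eventually.of_forall fun r => (Real.exp_pos _).le)
    (Filter.Eventually.of_forall fun r => (Real.exp_pos _).le)
    (memLp_exp_half μ hμ u) (memLp_exp_half μ hμ v)
  have h1 : (fun r => Real.exp (u / 2 * r) * Real.exp (v / 2 * r))
      = fun r => Real.exp ((u + v) / 2 * r) := by
    funext r; rw [← Real.exp_add]; ring_nf
  have h2 : ∀ w : ℝ, (fun r => Real.exp (w / 2 * r) ^ (2:ℝ)) = fun r => Real.exp (w * r) := by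
    intro w; funext r
    rw [show ((2:ℝ) = ((2:ℕ):ℝ)) by norm_num, Real.rpow_natCast, sq, ← Real.exp_add]; ring_nf
  rw [h1] at hH
  simp only [h2] at hH
  have hu := integral_exp_pos' μ hμ u
  have hv := integral_exp_pos' μ hμ v
  have hm := integral_exp_pos' μ hμ ((u + v) / 2)
  have hlog := Real.log_le_log hm hH
  rw [Real.log_mul (by positivity) (by positivity), Real.log_rpow hu, Real.log_rpow hv] at hlog
  unfold cgfm
  linarith

lemma multiset_half {α : Type*} (s : Multiset α) (F1 F2 G : α → ℝ)
    (h : ∀ q ∈ s, G q ≤ (F1 q + F2 q) / 2) :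
    (s.map G).sum ≤ ((s.map F1).sum + (s.map F2).sum) / 2 := by
  induction s using Multiset.induction with
  | empty => simp
  | cons a s ih =>
    simp only [Multiset.map_cons, Multiset.sum_cons]
    have h1 := h a (Multiset.mem_cons_self a s)
    have h2 := ih fun q hq => h q (Multiset.mem_cons_of_mem hq)
    linarith

lemma scoraLoss_midpoint {Dd A : ℕ} (x : Fin A → EuclideanSpace ℝ (Fin Dd))
    (f g : Measure ℝ) [IsProbabilityMeasure f] [IsProbabilityMeasure g]
    (hf : HasExpMoments f) (hg : HasExpMoments g)
    (sb2 s02 : ℝ) (hsb : 0 < sb2) (hs0 : 0 < s02)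
    (C : Multiset (Fin A × Fin A × ℝ)) (Rt : Multiset (Fin A × ℝ))
    (β β' : EuclideanSpace ℝ (Fin Dd)) (θ0 θ0' : ℝ) :
    scoraLoss x f g sb2 s02 C Rt ((1/2:ℝ) • β + (1/2:ℝ) • β') ((θ0 + θ0') / 2)
      ≤ (scoraLoss x f g sb2 s02 C Rt β θ0 + scoraLoss x f g sb2 s02 C Rt β' θ0') / 2
        - (‖β - β'‖ ^ 2 / (8 * sb2) + (θ0 - θ0') ^ 2 / (8 * s02)) := by
  set m : EuclideanSpace ℝ (Fin Dd) := (1/2:ℝ) • β + (1/2:ℝ) • β' with hm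
  have hinner : ∀ w : EuclideanSpace ℝ (Fin Dd), ⟪w, m⟫ = (⟪w, β⟫ + ⟪w, β'⟫) / 2 := by
    intro w
    simp only [hm, inner_add_right, real_inner_smul_right]
    ring
  have hnormsq : ‖m‖ ^ 2 = (‖β‖ ^ 2 + ‖β'‖ ^ 2) / 2 - ‖β - β'‖ ^ 2 / 4 := by
    have hp := parallelogram_law_with_norm ℝ β β'
    have hms : m = (1/2:ℝ) • (β + β') := by rw [hm, smul_add]
    have hmn : ‖m‖ = (1/2) * ‖β + β'‖ := by rw [hms, norm_smul]; norm_num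
    rw [hmn]
    nlinarith [hp]
  have e1 : ‖m‖ ^ 2 / (2 * sb2)
      = (‖β‖ ^ 2 / (2 * sb2) + ‖β'‖ ^ 2 / (2 * sb2)) / 2 - ‖β - β'‖ ^ 2 / (8 * sb2) := by
    rw [hnormsq]; field_simp; ring
  have e2 : ((θ0 + θ0') / 2) ^ 2 / (2 * s02)
      = (θ0 ^ 2 / (2 * s02) + θ0' ^ 2 / (2 * s02)) / 2 - (θ0 - θ0') ^ 2 / (8 * s02) := by
    field_simp; ring
  have i3 : (C.map (fun q =>
        cgfm f ⟪x q.1 - x q.2.1, m⟫ - q.2.2 * ⟪x q.1 - x q.2.1, m⟫)).sum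
      ≤ ((C.map (fun q =>
        cgfm f ⟪x q.1 - x q.2.1, β⟫ - q.2.2 * ⟪x q.1 - x q.2.1, β⟫)).sum
        + (C.map (fun q =>
        cgfm f ⟪x q.1 - x q.2.1, β'⟫ - q.2.2 * ⟪x q.1 - x q.2.1, β'⟫)).sum) / 2 := by
    apply multiset_half
    intro q _
    rw [hinner]
    have := cgfm_midpoint f hf ⟪x q.1 - x q.2.1, β⟫ ⟪x q.1 - x q.2.1, β'⟫
    linarith
  have i4 : (Rt.map (fun q =>
        cgfm g (⟪x q.1, m⟫ - (θ0 + θ0') / 2) - q.2 * (⟪x q.1, m⟫ - (θ0 + θ0') / 2))).sum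
      ≤ ((Rt.map (fun q =>
        cgfm g (⟪x q.1, β⟫ - θ0) - q.2 * (⟪x q.1, β⟫ - θ0))).sum
        + (Rt.map (fun q =>
        cgfm g (⟪x q.1, β'⟫ - θ0') - q.2 * (⟪x q.1, β'⟫ - θ0'))).sum) / 2 := by
    apply multiset_half
    intro q _
    rw [hinner]
    have harg : (⟪x q.1, β⟫ + ⟪x q.1, β'⟫) / 2 - (θ0 + θ0') / 2
        = ((⟪x q.1, β⟫ - θ0) + (⟪x q.1, β'⟫ - θ0')) / 2 := by ring
    rw [harg]
    have := cgfm_midpoint g hg (⟪x q.1, β⟫ - θ0) (⟪x q.1, β'⟫ - θ0')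
    linarith
  unfold scoraLoss
  rw [e1, e2]
  linarith

lemma scoraLoss_shift {Dd A : ℕ} (x : Fin A → EuclideanSpace ℝ (Fin Dd))
    (f g : Measure ℝ) (sb2 s02 : ℝ)
    (C : Multiset (Fin A × Fin A × ℝ)) (R0 : Multiset (Fin A × ℝ))
    (a : Fin A) (t t' : ℝ) (γ : EuclideanSpace ℝ (Fin Dd)) (s : ℝ) :
    scoraLoss x f g sb2 s02 C ((a, t) ::ₘ R0) γ s
      = scoraLoss x f g sb2 s02 C ((a, t') ::ₘ R0) γ s + (t' - t) * (⟪x a, γ⟫ - s) := by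
  unfold scoraLoss
  simp only [Multiset.map_cons, Multiset.sum_cons]
  ring

/-- pairwise monotonicity of the SCoRa MAP estimator for ratings.
If two SCoRa datasets share the comparisons `C` and the ratings `R0`, except that one
rating of entity `a` has value `t` in the first and `t'` in the second with `t ≥ t'`,
then `θ_a*(D) − θ_0*(D) ≥ θ_a*(D') − θ_0*(D')` (where `θ_a* = x_aᵀ β*`). -/
theorem scora_pairwise_monotone_ratings
    {Dd A : ℕ} (x : Fin A → EuclideanSpace ℝ (Fin Dd))
    (f g : Measure ℝ) [IsProbabilityMeasure f] [IsProbabilityMeasure g]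
    (hf : HasExpMoments f) (hg : HasExpMoments g)
    (sb2 s02 : ℝ) (hsb : 0 < sb2) (hs0 : 0 < s02)
    (C : Multiset (Fin A × Fin A × ℝ)) (R0 : Multiset (Fin A × ℝ))
    (a : Fin A) (t t' : ℝ) (htt : t ≥ t')
    (β β' : EuclideanSpace ℝ (Fin Dd)) (θ0 θ0' : ℝ)
    (hmin : ∀ (γ : EuclideanSpace ℝ (Fin Dd)) (s : ℝ),
      scoraLoss x f g sb2 s02 C ((a, t) ::ₘ R0) β θ0
        ≤ scoraLoss x f g sb2 s02 C ((a, t) ::ₘ R0) γ s)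
    (hmin' : ∀ (γ : EuclideanSpace ℝ (Fin Dd)) (s : ℝ),
      scoraLoss x f g sb2 s02 C ((a, t') ::ₘ R0) β' θ0'
        ≤ scoraLoss x f g sb2 s02 C ((a, t') ::ₘ R0) γ s) :
    ⟪x a, β⟫ - θ0 ≥ ⟪x a, β'⟫ - θ0' := by
  obtain hlt | heq := htt.lt_or_eq
  · -- t' < t : exchange argument
    have h1 := hmin β' θ0'
    have h2 := hmin' β θ0
    rw [scoraLoss_shift x f g sb2 s02 C R0 a t t' β θ0,
        scoraLoss_shift x f g sb2 s02 C R0 a t t' β' θ0'] at h1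
    set u := ⟪x a, β⟫ - θ0 with hu
    set u' := ⟪x a, β'⟫ - θ0' with hu'
    have key : (t' - t) * u ≤ (t' - t) * u' := by linarith
    by_contra hcon
    push_neg at hcon
    have : (t' - t) * u' < (t' - t) * u :=
      mul_lt_mul_of_neg_left hcon (by linarith)
    linarith
  · -- t' = t : uniqueness of the minimizer via strict convexity
    subst heq
    have hE : scoraLoss x f g sb2 s02 C ((a, t') ::ₘ R0) β θ0
        = scoraLoss x f g sb2 s02 C ((a, t') ::ₘ R0) β' θ0' :=
      le_antisymm (hmin β' θ0') (hmin' β θ0)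
    have hmid := scoraLoss_midpoint x f g hf hg sb2 s02 hsb hs0 C ((a, t') ::ₘ R0) β β' θ0 θ0'
    have hlow := hmin ((1/2:ℝ) • β + (1/2:ℝ) • β') ((θ0 + θ0') / 2)
    have hquad : ‖β - β'‖ ^ 2 / (8 * sb2) + (θ0 - θ0') ^ 2 / (8 * s02) ≤ 0 := by
      linarith [hmid, hlow, hE]
    have hA : (0:ℝ) ≤ ‖β - β'‖ ^ 2 / (8 * sb2) := by positivity
    have hB : (0:ℝ) ≤ (θ0 - θ0') ^ 2 / (8 * s02) := by positivity
    have hb : β = β' := by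
      by_contra hne
      have hpos : (0:ℝ) < ‖β - β'‖ := by
        rw [norm_pos_iff]; exact sub_ne_zero.mpr hne
      have : (0:ℝ) < ‖β - β'‖ ^ 2 / (8 * sb2) := by positivity
      linarith
    have hθ : θ0 = θ0' := by
      by_contra hne
      have : (0:ℝ) < (θ0 - θ0') ^ 2 / (8 * s02) := by
        have : θ0 - θ0' ≠ 0 := sub_ne_zero.mpr hne
        positivity
      linarith
    rw [hb, hθ]


end
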